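/- Let X be a Hausdorff space, κ and λ infinite cardinals. Suppose X has a dense subset D with |D| ≤ κ, and every point of X has a linked local π-base of cardinality at most λ. Then |X| ≤ κ^λ. -/

import Mathlib

open Set Topology Cardinal

universe u

/-- A local π-base at `p`: a family of nonempty open sets such that every open
set containing `p` contains a member of the family. -/
def IsLocalPiBase {X : Type u} [TopologicalSpace X] (p : X) (𝓑 : Set (Set X)) : Prop :=
  (∀ b ∈ 𝓑, IsOpen b ∧ b.Nonempty) ∧
  ∀ U : Set X, IsOpen U → p ∈ U → ∃ b ∈ 𝓑, b ⊆ U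

/-- A family of sets is centered if it has the finite intersection property. -/
def Centered {X : Type u} (𝓑 : Set (Set X)) : Prop :=
  ∀ F : Finset (Set X), F.Nonempty → ↑F ⊆ 𝓑 → (⋂₀ (F : Set (Set X))).Nonempty

/-- A family of sets is linked if any two members meet. -/
def Linked {X : Type u} (𝓑 : Set (Set X)) : Prop :=
  ∀ b₁ ∈ 𝓑, ∀ b₂ ∈ 𝓑, (b₁ ∩ b₂).Nonempty

/-- A decreasing local π-base at `p`, given as a ⊆-decreasing sequence of
nonempty open sets. -/
def IsDecreasingLocalPiBase {X : Type u} [TopologicalSpace X] (p : X) (A : ℕ → Set X) : Prop :=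
  (∀ n, IsOpen (A n) ∧ (A n).Nonempty) ∧
  (∀ n, A (n + 1) ⊆ A n) ∧
  ∀ U : Set X, IsOpen U → p ∈ U → ∃ n, A n ⊆ U

/-- A cellular family: pairwise disjoint nonempty open sets. -/
def IsCellular {X : Type u} [TopologicalSpace X] (𝓒 : Set (Set X)) : Prop :=
  (∀ c ∈ 𝓒, IsOpen c ∧ c.Nonempty) ∧ 𝓒.PairwiseDisjoint id

/-- A weak closed pseudobase at `p`: a family of open sets whose closures
intersect exactly in `{p}`. -/
def IsWeakClosedPseudobase {X : Type u} [TopologicalSpace X] (p : X) (𝓑 : Set (Set X)) : Prop :=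
  (∀ b ∈ 𝓑, IsOpen b) ∧ (⋂ b ∈ 𝓑, closure b) = {p}

/-- A neighborhood base at `p` consisting of open sets containing `p`. -/
def IsNhdBase {X : Type u} [TopologicalSpace X] (p : X) (𝓑 : Set (Set X)) : Prop :=
  (∀ b ∈ 𝓑, IsOpen b ∧ p ∈ b) ∧
  ∀ U : Set X, IsOpen U → p ∈ U → ∃ b ∈ 𝓑, b ⊆ U

/-- if a Hausdorff space has a dense set of cardinality ≤ κ and every
point has a linked local π-base of cardinality ≤ λ, then |X| ≤ κ^λ. -/
theorem card_le_density_pow_linkedPiChar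
    {X : Type u} [TopologicalSpace X] [T2Space X] (κ lam : Cardinal.{u})
    (hκ : ℵ₀ ≤ κ) (hlam : ℵ₀ ≤ lam)
    (hD : ∃ D : Set X, Dense D ∧ #D ≤ κ)
    (hπ : ∀ p : X, ∃ 𝓑 : Set (Set X), IsLocalPiBase p 𝓑 ∧ Linked 𝓑 ∧ #𝓑 ≤ lam) :
    #X ≤ κ ^ lam := by
  rcases isEmpty_or_nonempty X with hX | hX
  · exact le_trans (le_of_eq (Cardinal.mk_eq_zero X)) zero_le
  obtain ⟨D, hDdense, hDcard⟩ := hD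
  choose 𝓑 hπbase hlinked hcard using hπ
  set T := lam.out with hTdef
  have hT : #T = lam := Cardinal.mk_out lam
  -- enumerate each π-base by T
  have hsur : ∀ p : X, ∃ s : T → Set X, (∀ i, s i ∈ 𝓑 p) ∧ ∀ b ∈ 𝓑 p, ∃ i, s i = b := by
    intro p
    have hne : (𝓑 p).Nonempty := by
      obtain ⟨b, hb, -⟩ := (hπbase p).2 univ isOpen_univ (mem_univ p)
      exact ⟨b, hb⟩
    have hle : #(𝓑 p) ≤ #T := (hcard p).trans_eq hT.symm
    obtain ⟨f⟩ := (Cardinal.le_def _ _).mp hle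
    haveI : Nonempty (𝓑 p) := hne.to_subtype
    refine ⟨fun i => ((Function.invFun f i : ↥(𝓑 p)) : Set X),
      fun i => Subtype.coe_prop _, fun b hb => ?_⟩
    refine ⟨f ⟨b, hb⟩, ?_⟩
    show ((Function.invFun f (f ⟨b, hb⟩) : ↥(𝓑 p)) : Set X) = b
    rw [Function.leftInverse_invFun f.injective ⟨b, hb⟩]
  choose s hs_mem hs_sur using hsur
  -- pick a dense point in each pairwise intersection
  have hpt : ∀ (p : X) (i j : T), ((s p i ∩ s p j) ∩ D).Nonempty := by
    intro p i j
    have h1 := hlinked p _ (hs_mem p i) _ (hs_mem p j)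
    have hopen : IsOpen (s p i ∩ s p j) :=
      ((hπbase p).1 _ (hs_mem p i)).1.inter ((hπbase p).1 _ (hs_mem p j)).1
    exact hDdense.inter_open_nonempty _ hopen h1
  choose f hf using hpt
  let F : X → (T × T → D) := fun p ij => ⟨f p ij.1 ij.2, (hf p ij.1 ij.2).2⟩
  have hFinj : Function.Injective F := by
    intro p q hpq
    by_contra hne
    obtain ⟨U, V, hU, hV, hpU, hqV, hUV⟩ := t2_separation hne
    obtain ⟨b, hb, hbU⟩ := (hπbase p).2 U hU hpU
    obtain ⟨c, hc, hcV⟩ := (hπbase q).2 V hV hqV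
    obtain ⟨i, hi⟩ := hs_sur p b hb
    obtain ⟨j, hj⟩ := hs_sur q c hc
    have h1 : f p i j ∈ U := hbU (hi ▸ (hf p i j).1.1)
    have h2 : f q i j ∈ V := hcV (hj ▸ (hf q i j).1.2)
    have heq : f p i j = f q i j := congrArg Subtype.val (congrFun hpq (i, j))
    exact (Set.disjoint_left.mp hUV h1) (heq ▸ h2)
  have hcalc : #X ≤ #D ^ lam := by
    calc #X ≤ #(T × T → ↥D) := Cardinal.mk_le_of_injective hFinj
      _ = #↥D ^ #(T × T) := (Cardinal.power_def _ _).symm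
      _ = #↥D ^ (lam * lam) := by
            rw [Cardinal.mk_prod, Cardinal.lift_id, hT]
      _ = #↥D ^ lam := by rw [Cardinal.mul_eq_self hlam]
  exact hcalc.trans (Cardinal.power_le_power_right hDcard)
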